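/- Let X = [x̲, x̄] ⊆ ℝⁿ be a closed hyperrectangle, let f : ℝⁿ → ℝᵐ be differentiable, and suppose that for each i ∈ {1,…,m} and j ∈ {1,…,n} there are extended reals a_{ij}, b_{ij} ∈ ℝ ∪ {−∞, +∞} with a_{ij} < b_{ij}, (a_{ij}, b_{ij}) ≠ (−∞, +∞), and ∂f_i/∂x_j(x) ∈ (a_{ij}, b_{ij}) for all x ∈ X. Classify each pair (i,j) into one of four (possibly overlapping, fix any valid choice) cases: case 1 if a_{ij} ≥ 0; case 2 if a_{ij} ≤ 0 ≤ b_{ij} and |a_{ij}| ≤ |b_{ij}| (so a_{ij} is finite); case 3 if a_{ij} ≤ 0 ≤ b_{ij} and |a_{ij}| ≥ |b_{ij}| (so b_{ij} is finite); case 4 if b_{ij} ≤ 0. Fix ε > 0 and define g : ℝⁿ × ℝⁿ → ℝᵐ by g_i(x,y) = f_i(z) + (α_i − β_i)ᵀ(x − y), where z_j = x_j in cases 1 and 2 and z_j = y_j in cases 3 and 4, α_{ij} = |a_{ij}| + ε in case 2 and α_{ij} = 0 otherwise, and β_{ij} = −|b_{ij}| − ε in case 3 and β_{ij} = 0 otherwise.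 Then g is a decomposition function of f on X; in particular f is mixed monotone on X with respect to the componentwise orders on ℝⁿ and ℝᵐ. -/

import Mathlib

/-- `g` is a decomposition function of `f` on `X` (componentwise orders). -/
def DecompOn {n m : ℕ} (f : (Fin n → ℝ) → Fin m → ℝ)
    (g : (Fin n → ℝ) → (Fin n → ℝ) → Fin m → ℝ) (X : Set (Fin n → ℝ)) : Prop :=
  (∀ x ∈ X, g x x = f x) ∧
  (∀ x₁ ∈ X, ∀ x₂ ∈ X, ∀ y ∈ X, x₁ ≤ x₂ → g x₁ y ≤ g x₂ y) ∧
  (∀ x ∈ X, ∀ y₁ ∈ X, ∀ y₂ ∈ X, y₁ ≤ y₂ → g x y₂ ≤ g x y₁)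

open Set Function in
private lemma hasDerivAt_f_update {n m : ℕ} {f : (Fin n → ℝ) → Fin m → ℝ}
    (hf : Differentiable ℝ f) (z : Fin n → ℝ) (j : Fin n) (i : Fin m) (t : ℝ) :
    HasDerivAt (fun s => f (Function.update z j s) i)
      (fderiv ℝ f (Function.update z j t) (Pi.single j 1) i) t := by
  have hpath : HasDerivAt (fun s : ℝ => Function.update z j s) (Pi.single j 1) t := by
    have h1 : (fun s : ℝ => Function.update z j s)
        = fun s => z + (s - z j) • (Pi.single j (1:ℝ) : Fin n → ℝ) := by
      funext s; funext k
      by_cases hk : k = j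
      · subst hk; simp [Pi.single_apply]
      · simp [Function.update_of_ne hk, Pi.single_apply, hk]
    rw [h1]
    simpa using (((hasDerivAt_id t).sub_const (z j)).smul_const (Pi.single j 1)).const_add z
  have hF := (hf (Function.update z j t)).hasFDerivAt.comp_hasDerivAt t hpath
  exact hasDerivAt_pi.mp hF i

private lemma hasDerivAt_sum_updX {n : ℕ} (κ : Fin n → ℝ) (x y : Fin n → ℝ) (j : Fin n) (t : ℝ) :
    HasDerivAt (fun s => ∑ j' : Fin n, κ j' * (Function.update x j s j' - y j')) (κ j) t := by
  have h : HasDerivAt (fun s => ∑ j' : Fin n, κ j' * (Function.update x j s j' - y j'))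
      (∑ j' : Fin n, if j' = j then κ j else 0) t := by
    apply HasDerivAt.fun_sum
    intro k _
    by_cases hk : k = j
    · subst hk
      simp only [Function.update_self]
      simpa using ((hasDerivAt_id t).sub_const (y k)).const_mul (κ k)
    · simp only [Function.update_of_ne hk, if_neg hk]
      exact hasDerivAt_const t _
  simpa using h

private lemma hasDerivAt_sum_updY {n : ℕ} (κ : Fin n → ℝ) (x y : Fin n → ℝ) (j : Fin n) (t : ℝ) :
    HasDerivAt (fun s => ∑ j' : Fin n, κ j' * (x j' - Function.update y j s j')) (-κ j) t := by
  have h : HasDerivAt (fun s => ∑ j' : Fin n, κ j' * (x j' - Function.update y j s j'))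
      (∑ j' : Fin n, if j' = j then -κ j else 0) t := by
    apply HasDerivAt.fun_sum
    intro k _
    by_cases hk : k = j
    · subst hk
      simp only [Function.update_self]
      simpa using ((hasDerivAt_id t).const_sub (x k)).const_mul (κ k)
    · simp only [Function.update_of_ne hk, if_neg hk]
      exact hasDerivAt_const t _
  simpa using h

private lemma chain_mono {n : ℕ} (xlo xhi : Fin n → ℝ) (G : (Fin n → ℝ) → ℝ)
    (h : ∀ x ∈ Set.Icc xlo xhi, ∀ j : Fin n, ∀ t, xlo j ≤ t → t ≤ xhi j → x j ≤ t →
      G x ≤ G (Function.update x j t))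
    (x₁ x₂ : Fin n → ℝ) (hx₁ : x₁ ∈ Set.Icc xlo xhi) (hx₂ : x₂ ∈ Set.Icc xlo xhi)
    (hle : x₁ ≤ x₂) : G x₁ ≤ G x₂ := by
  set w : ℕ → Fin n → ℝ := fun s j => if (j : ℕ) < s then x₂ j else x₁ j with hw
  have hwX : ∀ s, w s ∈ Set.Icc xlo xhi := by
    intro s
    refine ⟨fun j => ?_, fun j => ?_⟩ <;> by_cases hs : (j : ℕ) < s <;>
      simp only [hw, if_pos, if_neg, hs, if_true, if_false]
    · exact hx₂.1 j
    · exact hx₁.1 j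
    · exact hx₂.2 j
    · exact hx₁.2 j
  have key : ∀ s, G x₁ ≤ G (w s) := by
    intro s; induction s with
    | zero =>
      have h0 : w 0 = x₁ := funext fun k => by simp [hw]
      rw [h0]
    | succ s ih =>
      by_cases hs : s < n
      · set j : Fin n := ⟨s, hs⟩ with hj
        have h1 : w (s + 1) = Function.update (w s) j (x₂ j) := by
          funext k
          by_cases hk : k = j
          · subst hk
            simp only [Function.update_self, hw]
            rw [if_pos (show ((⟨s, hs⟩ : Fin n) : ℕ) < s + 1 from Nat.lt_succ_self s)]
          · have hks : (k : ℕ) ≠ s := fun hh => hk (Fin.ext hh)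
            rw [Function.update_of_ne hk]
            simp only [hw]
            by_cases h2 : (k : ℕ) < s
            · rw [if_pos (by omega), if_pos h2]
            · rw [if_neg (by omega), if_neg h2]
        have h2 : w s j = x₁ j := by
          simp only [hw]
          rw [if_neg (by simp [hj])]
        rw [h1]
        exact ih.trans (h (w s) (hwX s) j (x₂ j) (hx₂.1 j) (hx₂.2 j) (h2 ▸ hle j))
      · have heq : w (s + 1) = w s := funext fun k => by
          have hk := k.isLt
          simp only [hw]
          rw [if_pos (by omega), if_pos (by omega)]
        rw [heq]; exact ih
  have hn : w n = x₂ := funext fun k => by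
    simp only [hw]; rw [if_pos k.isLt]
  exact hn ▸ key n


private lemma coordX {n m : ℕ} (xlo xhi : Fin n → ℝ)
    (f : (Fin n → ℝ) → Fin m → ℝ) (hf : Differentiable ℝ f)
    (a b : Fin m → Fin n → EReal)
    (hnot_all : ∀ i j, ¬(a i j = ⊥ ∧ b i j = ⊤))
    (hbound : ∀ i j, ∀ x ∈ Set.Icc xlo xhi,
      ((fderiv ℝ f x (Pi.single j 1) i : ℝ) : EReal) ∈ Set.Ioo (a i j) (b i j))
    (c : Fin m → Fin n → Fin 4)
    (hcase : ∀ i j,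
      (c i j = 0 → 0 ≤ a i j) ∧
      (c i j = 1 → a i j ≤ 0 ∧ 0 ≤ b i j ∧ -(a i j) ≤ b i j) ∧
      (c i j = 2 → a i j ≤ 0 ∧ 0 ≤ b i j ∧ b i j ≤ -(a i j)) ∧
      (c i j = 3 → b i j ≤ 0))
    (ε : ℝ) (hε : 0 < ε)
    (i : Fin m) (x y : Fin n → ℝ) (hx : x ∈ Set.Icc xlo xhi) (hy : y ∈ Set.Icc xlo xhi)
    (j : Fin n) :
    MonotoneOn (fun t =>
      f (fun j' => if c i j' = 0 ∨ c i j' = 1 then Function.update x j t j' else y j') i +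
        ∑ j' : Fin n,
          ((if c i j' = 1 then |(a i j').toReal| + ε else 0) -
            (if c i j' = 2 then -|(b i j').toReal| - ε else 0)) *
            (Function.update x j t j' - y j'))
      (Set.Icc (xlo j) (xhi j)) := by
  set zx : Fin n → ℝ := fun j' => if c i j' = 0 ∨ c i j' = 1 then x j' else y j' with hzx
  have hzxX : zx ∈ Set.Icc xlo xhi := by
    refine ⟨fun j' => ?_, fun j' => ?_⟩ <;> simp only [hzx] <;> split
    · exact hx.1 j'
    · exact hy.1 j'
    · exact hx.2 j'
    · exact hy.2 j'
  have hΦ : ∀ t : ℝ, HasDerivAt (fun t =>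
      f (fun j' => if c i j' = 0 ∨ c i j' = 1 then Function.update x j t j' else y j') i +
        ∑ j' : Fin n,
          ((if c i j' = 1 then |(a i j').toReal| + ε else 0) -
            (if c i j' = 2 then -|(b i j').toReal| - ε else 0)) *
            (Function.update x j t j' - y j'))
      ((if c i j = 0 ∨ c i j = 1
          then fderiv ℝ f (Function.update zx j t) (Pi.single j 1) i else 0) +
        ((if c i j = 1 then |(a i j).toReal| + ε else 0) -
          (if c i j = 2 then -|(b i j).toReal| - ε else 0))) t := by
    intro t
    have hsum := hasDerivAt_sum_updX
      (fun j' => (if c i j' = 1 then |(a i j').toReal| + ε else 0) -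
        (if c i j' = 2 then -|(b i j').toReal| - ε else 0)) x y j t
    by_cases hP : c i j = 0 ∨ c i j = 1
    · have hfun : ∀ s : ℝ,
          (fun j' => if c i j' = 0 ∨ c i j' = 1 then Function.update x j s j' else y j')
            = Function.update zx j s := by
        intro s; funext j'
        by_cases hj' : j' = j
        · subst hj'; rw [if_pos hP, Function.update_self, Function.update_self]
        · rw [Function.update_of_ne hj', Function.update_of_ne hj']
      simp only [hfun]
      rw [if_pos hP]
      exact (hasDerivAt_f_update hf zx j i t).add hsum
    · have hfun : ∀ s : ℝ,
          (fun j' => if c i j' = 0 ∨ c i j' = 1 then Function.update x j s j' else y j')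
            = zx := by
        intro s; funext j'
        by_cases hj' : j' = j
        · subst hj'; rw [if_neg hP]; simp only [hzx]; rw [if_neg hP]
        · rw [Function.update_of_ne hj']
      simp only [hfun]
      rw [if_neg hP, zero_add]
      simpa using hsum
  apply monotoneOn_of_deriv_nonneg (convex_Icc _ _)
  · exact fun t _ => (hΦ t).continuousAt.continuousWithinAt
  · exact fun t _ => (hΦ t).differentiableAt.differentiableWithinAt
  · intro t ht
    rw [interior_Icc] at ht
    rw [(hΦ t).deriv]
    have hmem : Function.update zx j t ∈ Set.Icc xlo xhi := by
      refine ⟨fun j' => ?_, fun j' => ?_⟩ <;> by_cases hj' : j' = j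
      · subst hj'; rw [Function.update_self]; exact ht.1.le
      · rw [Function.update_of_ne hj']; exact hzxX.1 j'
      · subst hj'; rw [Function.update_self]; exact ht.2.le
      · rw [Function.update_of_ne hj']; exact hzxX.2 j'
    have hD := hbound i j _ hmem
    have hc4 : c i j = 0 ∨ c i j = 1 ∨ c i j = 2 ∨ c i j = 3 := by omega
    rcases hc4 with hc | hc | hc | hc
    · rw [if_pos (Or.inl hc), if_neg (by rw [hc]; decide), if_neg (by rw [hc]; decide)]
      have h0 : ((0 : ℝ) : EReal) < _ := lt_of_le_of_lt (by simpa using (hcase i j).1 hc) hD.1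
      have h0' := EReal.coe_lt_coe_iff.mp h0
      linarith
    · rw [if_pos (Or.inr hc), if_pos hc, if_neg (by rw [hc]; decide)]
      obtain ⟨ha0, hb0, hneg⟩ := (hcase i j).2.1 hc
      have habot : a i j ≠ ⊥ := by
        intro hbot
        refine hnot_all i j ⟨hbot, top_le_iff.mp ?_⟩
        rw [hbot, EReal.neg_bot] at hneg; exact hneg
      have hatop : a i j ≠ ⊤ := (hD.1.trans (EReal.coe_lt_top _)).ne
      have ha' : (a i j).toReal < fderiv ℝ f (Function.update zx j t) (Pi.single j 1) i := by
        rw [← EReal.coe_lt_coe_iff, EReal.coe_toReal hatop habot]; exact hD.1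
      have ha'' : (a i j).toReal ≤ 0 := by
        simpa using EReal.toReal_le_toReal ha0 habot (by simp)
      rw [abs_of_nonpos ha'']
      linarith
    · rw [if_neg (by rw [hc]; decide), if_neg (by rw [hc]; decide), if_pos hc]
      have := abs_nonneg (b i j).toReal
      linarith
    · rw [if_neg (by rw [hc]; decide), if_neg (by rw [hc]; decide),
        if_neg (by rw [hc]; decide)]
      norm_num

private lemma coordY {n m : ℕ} (xlo xhi : Fin n → ℝ)
    (f : (Fin n → ℝ) → Fin m → ℝ) (hf : Differentiable ℝ f)
    (a b : Fin m → Fin n → EReal)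
    (hab : ∀ i j, a i j < b i j)
    (hnot_all : ∀ i j, ¬(a i j = ⊥ ∧ b i j = ⊤))
    (hbound : ∀ i j, ∀ x ∈ Set.Icc xlo xhi,
      ((fderiv ℝ f x (Pi.single j 1) i : ℝ) : EReal) ∈ Set.Ioo (a i j) (b i j))
    (c : Fin m → Fin n → Fin 4)
    (hcase : ∀ i j,
      (c i j = 0 → 0 ≤ a i j) ∧
      (c i j = 1 → a i j ≤ 0 ∧ 0 ≤ b i j ∧ -(a i j) ≤ b i j) ∧
      (c i j = 2 → a i j ≤ 0 ∧ 0 ≤ b i j ∧ b i j ≤ -(a i j)) ∧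
      (c i j = 3 → b i j ≤ 0))
    (ε : ℝ) (hε : 0 < ε)
    (i : Fin m) (x y : Fin n → ℝ) (hx : x ∈ Set.Icc xlo xhi) (hy : y ∈ Set.Icc xlo xhi)
    (j : Fin n) :
    AntitoneOn (fun t =>
      f (fun j' => if c i j' = 0 ∨ c i j' = 1 then x j' else Function.update y j t j') i +
        ∑ j' : Fin n,
          ((if c i j' = 1 then |(a i j').toReal| + ε else 0) -
            (if c i j' = 2 then -|(b i j').toReal| - ε else 0)) *
            (x j' - Function.update y j t j'))
      (Set.Icc (xlo j) (xhi j)) := by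
  set zx : Fin n → ℝ := fun j' => if c i j' = 0 ∨ c i j' = 1 then x j' else y j' with hzx
  have hzxX : zx ∈ Set.Icc xlo xhi := by
    refine ⟨fun j' => ?_, fun j' => ?_⟩ <;> simp only [hzx] <;> split
    · exact hx.1 j'
    · exact hy.1 j'
    · exact hx.2 j'
    · exact hy.2 j'
  have hΦ : ∀ t : ℝ, HasDerivAt (fun t =>
      f (fun j' => if c i j' = 0 ∨ c i j' = 1 then x j' else Function.update y j t j') i +
        ∑ j' : Fin n,
          ((if c i j' = 1 then |(a i j').toReal| + ε else 0) -
            (if c i j' = 2 then -|(b i j').toReal| - ε else 0)) *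
            (x j' - Function.update y j t j'))
      ((if c i j = 0 ∨ c i j = 1 then 0
          else fderiv ℝ f (Function.update zx j t) (Pi.single j 1) i) +
        -((if c i j = 1 then |(a i j).toReal| + ε else 0) -
          (if c i j = 2 then -|(b i j).toReal| - ε else 0))) t := by
    intro t
    have hsum := hasDerivAt_sum_updY
      (fun j' => (if c i j' = 1 then |(a i j').toReal| + ε else 0) -
        (if c i j' = 2 then -|(b i j').toReal| - ε else 0)) x y j t
    by_cases hP : c i j = 0 ∨ c i j = 1
    · have hfun : ∀ s : ℝ,
          (fun j' => if c i j' = 0 ∨ c i j' = 1 then x j' else Function.update y j s j')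
            = zx := by
        intro s; funext j'
        by_cases hj' : j' = j
        · subst hj'; rw [if_pos hP]; simp only [hzx]; rw [if_pos hP]
        · rw [Function.update_of_ne hj']
      simp only [hfun]
      rw [if_pos hP]
      exact (hasDerivAt_const t (f zx i)).add hsum
    · have hfun : ∀ s : ℝ,
          (fun j' => if c i j' = 0 ∨ c i j' = 1 then x j' else Function.update y j s j')
            = Function.update zx j s := by
        intro s; funext j'
        by_cases hj' : j' = j
        · subst hj'; rw [if_neg hP, Function.update_self, Function.update_self]
        · rw [Function.update_of_ne hj', Function.update_of_ne hj']
      simp only [hfun]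
      rw [if_neg hP]
      exact (hasDerivAt_f_update hf zx j i t).add hsum
  apply antitoneOn_of_deriv_nonpos (convex_Icc _ _)
  · exact fun t _ => (hΦ t).continuousAt.continuousWithinAt
  · exact fun t _ => (hΦ t).differentiableAt.differentiableWithinAt
  · intro t ht
    rw [interior_Icc] at ht
    rw [(hΦ t).deriv]
    have hmem : Function.update zx j t ∈ Set.Icc xlo xhi := by
      refine ⟨fun j' => ?_, fun j' => ?_⟩ <;> by_cases hj' : j' = j
      · subst hj'; rw [Function.update_self]; exact ht.1.le
      · rw [Function.update_of_ne hj']; exact hzxX.1 j'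
      · subst hj'; rw [Function.update_self]; exact ht.2.le
      · rw [Function.update_of_ne hj']; exact hzxX.2 j'
    have hD := hbound i j _ hmem
    have hc4 : c i j = 0 ∨ c i j = 1 ∨ c i j = 2 ∨ c i j = 3 := by omega
    rcases hc4 with hc | hc | hc | hc
    · rw [if_pos (Or.inl hc), if_neg (by rw [hc]; decide), if_neg (by rw [hc]; decide)]
      norm_num
    · rw [if_pos (Or.inr hc), if_pos hc, if_neg (by rw [hc]; decide)]
      have := abs_nonneg (a i j).toReal
      linarith
    · rw [if_neg (by rw [hc]; decide), if_neg (by rw [hc]; decide), if_pos hc]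
      obtain ⟨ha0, hb0, hneg⟩ := (hcase i j).2.2.1 hc
      have hbtop : b i j ≠ ⊤ := by
        intro htop
        refine hnot_all i j ⟨?_, htop⟩
        rw [htop] at hneg
        have h' : -(a i j) = ⊤ := top_le_iff.mp hneg
        rw [← EReal.neg_bot] at h'
        exact neg_injective h'
      have hbbot : b i j ≠ ⊥ := ((EReal.bot_lt_coe _).trans hD.2).ne'
      have hb' : fderiv ℝ f (Function.update zx j t) (Pi.single j 1) i < (b i j).toReal := by
        rw [← EReal.coe_lt_coe_iff, EReal.coe_toReal hbtop hbbot]; exact hD.2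
      have hb'' : 0 ≤ (b i j).toReal := by
        simpa using EReal.toReal_le_toReal hb0 (by simp) hbtop
      rw [abs_of_nonneg hb'']
      linarith
    · rw [if_neg (by rw [hc]; decide), if_neg (by rw [hc]; decide),
        if_neg (by rw [hc]; decide)]
      have hb0 := (hcase i j).2.2.2 hc
      have hbtop : b i j ≠ ⊤ := ne_top_of_le_ne_top (by simp) hb0
      have hbbot : b i j ≠ ⊥ := ((EReal.bot_lt_coe _).trans hD.2).ne'
      have hb' : fderiv ℝ f (Function.update zx j t) (Pi.single j 1) i < (b i j).toReal := by
        rw [← EReal.coe_lt_coe_iff, EReal.coe_toReal hbtop hbbot]; exact hD.2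
      have hb'' : (b i j).toReal ≤ 0 := by
        simpa using EReal.toReal_le_toReal hb0 hbbot (by simp)
      linarith

/-- a differentiable function whose partial derivatives on the hyperrectangle
`X = [x̲, x̄]` lie in intervals `(aᵢⱼ, bᵢⱼ)` (with extended-real endpoints, not both infinite)
is mixed monotone on `X`, with the explicit decomposition function
`gᵢ(x,y) = fᵢ(z) + (αᵢ - βᵢ)ᵀ(x - y)` built from a case classification of the pairs `(i,j)`. -/
theorem mixed_monotone_of_bounded_partials {n m : ℕ} (xlo xhi : Fin n → ℝ)
    (f : (Fin n → ℝ) → Fin m → ℝ) (hf : Differentiable ℝ f)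
    (a b : Fin m → Fin n → EReal)
    (hab : ∀ i j, a i j < b i j)
    (hnot_all : ∀ i j, ¬(a i j = ⊥ ∧ b i j = ⊤))
    (hbound : ∀ i j, ∀ x ∈ Set.Icc xlo xhi,
      ((fderiv ℝ f x (Pi.single j 1) i : ℝ) : EReal) ∈ Set.Ioo (a i j) (b i j))
    -- a fixed valid classification of each pair (i,j) into one of the four cases
    (c : Fin m → Fin n → Fin 4)
    (hcase : ∀ i j,
      (c i j = 0 → 0 ≤ a i j) ∧
      (c i j = 1 → a i j ≤ 0 ∧ 0 ≤ b i j ∧ -(a i j) ≤ b i j) ∧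
      (c i j = 2 → a i j ≤ 0 ∧ 0 ≤ b i j ∧ b i j ≤ -(a i j)) ∧
      (c i j = 3 → b i j ≤ 0))
    (ε : ℝ) (hε : 0 < ε) :
    DecompOn f
      (fun x y i =>
        f (fun j => if c i j = 0 ∨ c i j = 1 then x j else y j) i +
          ∑ j : Fin n,
            ((if c i j = 1 then |(a i j).toReal| + ε else 0) -
              (if c i j = 2 then -|(b i j).toReal| - ε else 0)) * (x j - y j))
      (Set.Icc xlo xhi) ∧
    ∃ g, DecompOn f g (Set.Icc xlo xhi) := by
  have main : DecompOn f
      (fun x y i =>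
        f (fun j => if c i j = 0 ∨ c i j = 1 then x j else y j) i +
          ∑ j : Fin n,
            ((if c i j = 1 then |(a i j).toReal| + ε else 0) -
              (if c i j = 2 then -|(b i j).toReal| - ε else 0)) * (x j - y j))
      (Set.Icc xlo xhi) := by
    refine ⟨?_, ?_, ?_⟩
    · intro x hx
      funext i
      simp
    · intro x₁ hx₁ x₂ hx₂ y hy hle i
      refine chain_mono xlo xhi (fun x =>
        f (fun j => if c i j = 0 ∨ c i j = 1 then x j else y j) i +
          ∑ j : Fin n,
            ((if c i j = 1 then |(a i j).toReal| + ε else 0) -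
              (if c i j = 2 then -|(b i j).toReal| - ε else 0)) * (x j - y j))
        ?_ x₁ x₂ hx₁ hx₂ hle
      intro x hx j t ht1 ht2 hxt
      have h1 := coordX xlo xhi f hf a b hnot_all hbound c hcase ε hε i x y hx hy j
        (Set.mem_Icc.mpr ⟨hx.1 j, hx.2 j⟩) (Set.mem_Icc.mpr ⟨ht1, ht2⟩) hxt
      simpa [Function.update_eq_self] using h1
    · intro x hx y₁ hy₁ y₂ hy₂ hle i
      have key := chain_mono xlo xhi (fun y =>
        -(f (fun j => if c i j = 0 ∨ c i j = 1 then x j else y j) i +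
          ∑ j : Fin n,
            ((if c i j = 1 then |(a i j).toReal| + ε else 0) -
              (if c i j = 2 then -|(b i j).toReal| - ε else 0)) * (x j - y j)))
        ?_ y₁ y₂ hy₁ hy₂ hle
      · exact neg_le_neg_iff.mp key
      · intro y hy j t ht1 ht2 hyt
        have h1 := coordY xlo xhi f hf a b hab hnot_all hbound c hcase ε hε i x y hx hy j
          (Set.mem_Icc.mpr ⟨hy.1 j, hy.2 j⟩) (Set.mem_Icc.mpr ⟨ht1, ht2⟩) hyt
        have h2 : -(f (fun j' => if c i j' = 0 ∨ c i j' = 1 then x j'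
              else Function.update y j (y j) j') i +
            ∑ j' : Fin n,
              ((if c i j' = 1 then |(a i j').toReal| + ε else 0) -
                (if c i j' = 2 then -|(b i j').toReal| - ε else 0)) *
                (x j' - Function.update y j (y j) j')) ≤
            -(f (fun j' => if c i j' = 0 ∨ c i j' = 1 then x j'
              else Function.update y j t j') i +
            ∑ j' : Fin n,
              ((if c i j' = 1 then |(a i j').toReal| + ε else 0) -
                (if c i j' = 2 then -|(b i j').toReal| - ε else 0)) *
                (x j' - Function.update y j t j')) := neg_le_neg h1
        simpa [Function.update_eq_self] using h2
  exact ⟨main, _, main⟩
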